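/- Let d ≥ 1, and suppose the density q(0,x;s,·) of a random vector Y_s satisfies the Gaussian upper bound q(0,x;s,z) ≤ Ĉ g_{ĉs}(x,z) for all z, where Ĉ, ĉ > 0 and g_{cr}(x,y) = (2πcr)^{−d/2} exp(−|y−x|²/(2cr)). Then for every c > 0, p > 1, 0 ≤ s < t and x, y ∈ ℝ^d: (∫_{ℝ^d} q(0,x;s,z) g_{c(t−s)}(z,y)^p dz)^{1/p} ≤ (Ĉ^{1/p} / c^{d(p−1)/(2p)}) · ((p(c∨ĉ))^{d/2} / (c∧ĉ)^{d/(2p)}) · (t/(t−s))^{d(p−1)/(2p)} · g_{p(c∨ĉ)t}(x,y). -/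

import Mathlib

open MeasureTheory Real

/-- Gaussian kernel with variance parameter `v` on `ℝ^d`. -/
noncomputable def gaussK (d : ℕ) (v : ℝ) (x y : EuclideanSpace ℝ (Fin d)) : ℝ :=
  (2 * Real.pi * v) ^ (-(d : ℝ) / 2) * Real.exp (-‖y - x‖ ^ 2 / (2 * v))

section aux
variable {d : ℕ}




lemma integrable_gauss_exp {v : ℝ} (hv : 0 < v) (m : EuclideanSpace ℝ (Fin d)) :
    Integrable (fun z : EuclideanSpace ℝ (Fin d) ↦ rexp (-‖z - m‖ ^ 2 / (2 * v))) := by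
  have hb : (0:ℝ) < 1 / (2 * v) := by positivity
  have h := (GaussianFourier.integrable_cexp_neg_mul_sq_norm_add (V := EuclideanSpace ℝ (Fin d))
      (b := (1 / (2 * v) : ℂ)) (by simpa using hb) 0 0).norm
  have h2 : Integrable (fun z : EuclideanSpace ℝ (Fin d) ↦ rexp (-‖z‖ ^ 2 / (2 * v))) := by
    convert h using 2 with z
    simp [Complex.norm_exp, neg_div, div_eq_inv_mul, neg_mul]
    push_cast
    field_simp
    norm_cast
  exact h2.comp_sub_right m

lemma integral_gauss_exp {v : ℝ} (hv : 0 < v) (m : EuclideanSpace ℝ (Fin d)) :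
    ∫ z : EuclideanSpace ℝ (Fin d), rexp (-‖z - m‖ ^ 2 / (2 * v)) =
      (2 * π * v) ^ ((d : ℝ) / 2) := by
  rw [integral_sub_right_eq_self (fun z : EuclideanSpace ℝ (Fin d) ↦ rexp (-‖z‖ ^ 2 / (2 * v))) m]
  have hb : (0:ℝ) < 1 / (2 * v) := by positivity
  have := GaussianFourier.integral_rexp_neg_mul_sq_norm (V := EuclideanSpace ℝ (Fin d)) hb
  simp only [finrank_euclideanSpace_fin] at this
  rw [show (fun z : EuclideanSpace ℝ (Fin d) ↦ rexp (-‖z‖ ^ 2 / (2 * v))) =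
      (fun z : EuclideanSpace ℝ (Fin d) ↦ rexp (-(1 / (2 * v)) * ‖z‖ ^ 2)) by
    funext z; ring_nf, this]
  congr 1
  field_simp


lemma gaussK_nonneg {v : ℝ} (hv : 0 ≤ v) (x y : EuclideanSpace ℝ (Fin d)) :
    0 ≤ gaussK d v x y := by
  unfold gaussK
  have : (0:ℝ) ≤ 2 * π * v := by positivity
  positivity

lemma gaussK_pos {v : ℝ} (hv : 0 < v) (x y : EuclideanSpace ℝ (Fin d)) :
    0 < gaussK d v x y := by
  unfold gaussK
  have : (0:ℝ) < 2 * π * v := by positivity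
  positivity

lemma gauss_prod {a b : ℝ} (ha : 0 < a) (hb : 0 < b) (x y z : EuclideanSpace ℝ (Fin d)) :
    gaussK d a x z * gaussK d b z y =
      gaussK d (a + b) x y * ((2 * π * (a * b / (a + b))) ^ (-(d:ℝ) / 2) *
        rexp (-‖z - (x + (a / (a + b)) • (y - x))‖ ^ 2 / (2 * (a * b / (a + b))))) := by
  unfold gaussK
  have hab : 0 < a + b := by linarith
  have hw : 0 < a * b / (a + b) := by positivity
  -- prefactor identity
  have hpre : (2 * π * a) ^ (-(d:ℝ) / 2) * (2 * π * b) ^ (-(d:ℝ) / 2) =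
      (2 * π * (a + b)) ^ (-(d:ℝ) / 2) * (2 * π * (a * b / (a + b))) ^ (-(d:ℝ) / 2) := by
    rw [← Real.mul_rpow (by positivity) (by positivity),
        ← Real.mul_rpow (by positivity) (by positivity)]
    congr 1
    field_simp
  -- exponent identity
  have hexp : -‖z - x‖ ^ 2 / (2 * a) + -‖y - z‖ ^ 2 / (2 * b) =
      -‖y - x‖ ^ 2 / (2 * (a + b)) +
        -‖z - (x + (a / (a + b)) • (y - x))‖ ^ 2 / (2 * (a * b / (a + b))) := by
    set u := z - x with hu
    set e := y - x with he
    have h1 : y - z = e - u := by rw [hu, he]; abel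
    have h2 : z - (x + (a / (a + b)) • (y - x)) = u - (a / (a + b)) • e := by
      rw [hu, he]; abel
    rw [h1, h2]
    have n1 : ‖e - u‖ ^ 2 = ‖e‖ ^ 2 - 2 * inner ℝ e u + ‖u‖ ^ 2 := by
      rw [@norm_sub_sq_real]
    have n2 : ‖u - (a / (a + b)) • e‖ ^ 2 =
        ‖u‖ ^ 2 - 2 * ((a / (a + b)) * inner ℝ u e) + (a / (a + b)) ^ 2 * ‖e‖ ^ 2 := by
      rw [@norm_sub_sq_real, real_inner_smul_right, norm_smul]
      rw [mul_pow, Real.norm_eq_abs, sq_abs]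
    rw [n1, n2, real_inner_comm e u]
    field_simp
    ring
  rw [mul_mul_mul_comm, hpre, ← Real.exp_add, hexp, Real.exp_add, mul_mul_mul_comm]

lemma integrable_gauss_prod {a b : ℝ} (ha : 0 < a) (hb : 0 < b)
    (x y : EuclideanSpace ℝ (Fin d)) :
    Integrable (fun z : EuclideanSpace ℝ (Fin d) ↦ gaussK d a x z * gaussK d b z y) := by
  have hw : 0 < a * b / (a + b) := by positivity
  simp_rw [gauss_prod ha hb x y]
  exact (((integrable_gauss_exp hw (x + (a / (a + b)) • (y - x))).const_mul
      ((2 * π * (a * b / (a + b))) ^ (-(d:ℝ) / 2))).const_mul (gaussK d (a + b) x y))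

lemma gauss_CK {a b : ℝ} (ha : 0 < a) (hb : 0 < b) (x y : EuclideanSpace ℝ (Fin d)) :
    ∫ z : EuclideanSpace ℝ (Fin d), gaussK d a x z * gaussK d b z y =
      gaussK d (a + b) x y := by
  have hw : 0 < a * b / (a + b) := by positivity
  simp_rw [gauss_prod ha hb x y]
  rw [MeasureTheory.integral_const_mul, MeasureTheory.integral_const_mul, integral_gauss_exp hw,
    ← Real.rpow_add (by positivity), neg_div, neg_add_cancel, Real.rpow_zero, mul_one]


lemma gauss_pow {c' p : ℝ} (hc' : 0 < c') (hp : 0 < p) (z y : EuclideanSpace ℝ (Fin d)) :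
    gaussK d c' z y ^ p =
      p ^ (-(d:ℝ)/2) * (2*π*c') ^ (-(d:ℝ)*(p-1)/2) * gaussK d (c'/p) z y := by
  unfold gaussK
  have hA : (0:ℝ) < 2*π*c' := by positivity
  rw [Real.mul_rpow (by positivity) (Real.exp_nonneg _)]
  have hE : rexp (-‖y - z‖ ^ 2 / (2*c')) ^ p = rexp (-‖y - z‖ ^ 2 / (2*(c'/p))) := by
    rw [← Real.exp_mul]
    congr 1
    field_simp
  have e1 : ((2*π*c') ^ (-(d:ℝ)/2)) ^ p = (2*π*c') ^ ((-(d:ℝ)/2)*p) :=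
    (Real.rpow_mul hA.le _ _).symm
  have e2 : (2*π*(c'/p)) ^ (-(d:ℝ)/2) = (2*π*c') ^ (-(d:ℝ)/2) * p ^ ((d:ℝ)/2) := by
    rw [show 2*π*(c'/p) = (2*π*c')/p by ring, Real.div_rpow hA.le hp.le, neg_div,
      Real.rpow_neg hp.le]
    rw [div_eq_mul_inv, inv_inv]
  rw [hE, e1, e2]
  rw [show p ^ (-(d:ℝ)/2) * (2*π*c') ^ (-(d:ℝ)*(p-1)/2) *
      ((2*π*c') ^ (-(d:ℝ)/2) * p ^ ((d:ℝ)/2) * rexp (-‖y - z‖ ^ 2 / (2*(c'/p)))) =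
      (p ^ (-(d:ℝ)/2) * p ^ ((d:ℝ)/2)) * ((2*π*c') ^ (-(d:ℝ)*(p-1)/2) * (2*π*c') ^ (-(d:ℝ)/2))
        * rexp (-‖y - z‖ ^ 2 / (2*(c'/p))) by ring]
  rw [← Real.rpow_add hp, ← Real.rpow_add hA, neg_div, neg_add_cancel, Real.rpow_zero, one_mul]
  congr 2
  ring

lemma gauss_mono {v V : ℝ} (hv : 0 < v) (hV : v ≤ V) (x y : EuclideanSpace ℝ (Fin d)) :
    gaussK d v x y ≤ (V/v) ^ ((d:ℝ)/2) * gaussK d V x y := by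
  have hVp : 0 < V := lt_of_lt_of_le hv hV
  unfold gaussK
  have key : (V/v) ^ ((d:ℝ)/2) * (2*π*V) ^ (-(d:ℝ)/2) = (2*π*v) ^ (-(d:ℝ)/2) := by
    rw [show V/v = (2*π*V)/(2*π*v) by field_simp,
      Real.div_rpow (by positivity) (by positivity), neg_div,
      Real.rpow_neg (show (0:ℝ) ≤ 2*π*V by positivity),
      Real.rpow_neg (show (0:ℝ) ≤ 2*π*v by positivity)]
    have h1 : ((2*π*V) ^ ((d:ℝ)/2)) ≠ 0 := by positivity
    have h2 : ((2*π*v) ^ ((d:ℝ)/2)) ≠ 0 := by positivity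
    field_simp
  calc (2*π*v) ^ (-(d:ℝ)/2) * rexp (-‖y - x‖ ^ 2 / (2*v))
      ≤ (2*π*v) ^ (-(d:ℝ)/2) * rexp (-‖y - x‖ ^ 2 / (2*V)) := by
        apply mul_le_mul_of_nonneg_left _ (by positivity)
        apply Real.exp_le_exp.mpr
        rw [neg_div, neg_div, neg_le_neg_iff]
        gcongr
    _ = (V/v) ^ ((d:ℝ)/2) * ((2*π*V) ^ (-(d:ℝ)/2) * rexp (-‖y - x‖ ^ 2 / (2*V))) := by
        rw [← mul_assoc, key]

end aux

set_option maxHeartbeats 1000000 in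
theorem stmt15 (d : ℕ) (hd : 1 ≤ d) (Chat cHat c p s t : ℝ)
    (hChat : 0 < Chat) (hcHat : 0 < cHat) (hc : 0 < c) (hp : 1 < p) (hs : 0 ≤ s) (hst : s < t)
    (x y : EuclideanSpace ℝ (Fin d))
    (q : EuclideanSpace ℝ (Fin d) → ℝ) (hqm : Measurable q) (hq0 : ∀ z, 0 ≤ q z)
    (hqb : ∀ z, q z ≤ Chat * gaussK d (cHat * s) x z) :
    (∫ z, q z * gaussK d (c * (t - s)) z y ^ p) ^ (1 / p) ≤
      (Chat ^ (1 / p) / c ^ ((d : ℝ) * (p - 1) / (2 * p))) *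
        ((p * max c cHat) ^ ((d : ℝ) / 2) / (min c cHat) ^ ((d : ℝ) / (2 * p))) *
        (t / (t - s)) ^ ((d : ℝ) * (p - 1) / (2 * p)) *
        gaussK d (p * max c cHat * t) x y := by
  have ht : 0 < t := lt_of_le_of_lt hs hst
  have hτ : 0 < t - s := by linarith
  have hpp : 0 < p := lt_trans one_pos hp
  have hdpos : (0:ℝ) < d := by exact_mod_cast hd
  have hu : 0 < max c cHat := lt_of_lt_of_le hc (le_max_left c cHat)
  have hmn : 0 < min c cHat := lt_min hc hcHat
  have hput : 0 < p * max c cHat * t := by positivity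
  have hG : 0 ≤ gaussK d (p * max c cHat * t) x y := gaussK_nonneg hput.le x y
  have hCst : 0 < (Chat ^ (1 / p) / c ^ ((d : ℝ) * (p - 1) / (2 * p))) *
      ((p * max c cHat) ^ ((d : ℝ) / 2) / (min c cHat) ^ ((d : ℝ) / (2 * p))) *
      (t / (t - s)) ^ ((d : ℝ) * (p - 1) / (2 * p)) := by positivity
  rcases eq_or_lt_of_le hs with hs0 | hs0
  · -- degenerate case s = 0
    have hq' : ∀ z, q z = 0 := by
      intro z
      refine le_antisymm ?_ (hq0 z)
      have h := hqb z
      rw [← hs0, mul_zero] at h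
      have : gaussK d (0:ℝ) x z = 0 := by
        unfold gaussK
        rw [mul_zero, Real.zero_rpow, zero_mul]
        have : -(d:ℝ)/2 < 0 := by linarith
        exact ne_of_lt this
      rw [this, mul_zero] at h
      exact h
    have : (∫ z, q z * gaussK d (c * (t - s)) z y ^ p) = 0 := by
      simp [hq']
    rw [this, Real.zero_rpow (one_div_ne_zero (ne_of_gt hpp))]
    exact mul_nonneg hCst.le hG
  · -- main case 0 < s
    have ha : 0 < cHat * s := by positivity
    have hb2 : 0 < c * (t - s) := by positivity
    have hbp : 0 < c * (t - s) / p := by positivity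
    have hv : 0 < cHat * s + c * (t - s) / p := by positivity
    set K := p ^ (-(d:ℝ)/2) * (2*π*(c*(t-s))) ^ (-(d:ℝ)*(p-1)/2) with hK
    have hKpos : 0 < K := by rw [hK]; positivity
    -- Step 1 : bound the integral via Chapman–Kolmogorov
    have h1 : (∫ z, q z * gaussK d (c * (t - s)) z y ^ p) ≤
        (Chat * K) * gaussK d (cHat * s + c * (t - s) / p) x y := by
      have hint : Integrable (fun z : EuclideanSpace ℝ (Fin d) ↦
          (Chat * K) * (gaussK d (cHat * s) x z * gaussK d (c * (t - s) / p) z y)) :=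
        (integrable_gauss_prod ha hbp x y).const_mul _
      calc (∫ z, q z * gaussK d (c * (t - s)) z y ^ p)
          ≤ ∫ z, (Chat * K) * (gaussK d (cHat * s) x z * gaussK d (c * (t - s) / p) z y) := by
            refine integral_mono_of_nonneg (ae_of_all _ fun z ↦
              mul_nonneg (hq0 z) (Real.rpow_nonneg (gaussK_nonneg hb2.le z y) p)) hint
              (ae_of_all _ fun z ↦ ?_)
            calc q z * gaussK d (c * (t - s)) z y ^ p
                ≤ (Chat * gaussK d (cHat * s) x z) * gaussK d (c * (t - s)) z y ^ p :=
                  mul_le_mul_of_nonneg_right (hqb z)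
                    (Real.rpow_nonneg (gaussK_nonneg hb2.le z y) p)
              _ = (Chat * K) * (gaussK d (cHat * s) x z * gaussK d (c * (t - s) / p) z y) := by
                  rw [gauss_pow hb2 hpp z y, hK]; ring
        _ = (Chat * K) * ∫ z, gaussK d (cHat * s) x z * gaussK d (c * (t - s) / p) z y :=
            integral_const_mul _ _
        _ = (Chat * K) * gaussK d (cHat * s + c * (t - s) / p) x y := by
            rw [gauss_CK ha hbp x y]
    -- Step 2 : bump the variance up to (max c cHat) * t
    have hvut : cHat * s + c * (t - s) / p ≤ max c cHat * t := by
      have m1 : cHat ≤ max c cHat := le_max_right c cHat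
      have m2 : c ≤ max c cHat := le_max_left c cHat
      have e1 : cHat * s ≤ max c cHat * s := by nlinarith
      have e2 : c * (t - s) / p ≤ max c cHat * (t - s) := by
        rw [div_le_iff₀ hpp]
        nlinarith [mul_le_mul_of_nonneg_right (le_max_left c cHat) hτ.le, mul_pos hu hτ]
      nlinarith
    have hratio : max c cHat * t / (cHat * s + c * (t - s) / p) ≤
        p * max c cHat / min c cHat := by
      rw [div_le_div_iff₀ hv hmn]
      have m1 : min c cHat ≤ c := min_le_left c cHat
      have m2 : min c cHat ≤ cHat := min_le_right c cHat
      have r1 : (c ⊔ cHat) * s * (c ⊓ cHat) ≤ (c ⊔ cHat) * s * cHat :=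
        mul_le_mul_of_nonneg_left m2 (mul_nonneg hu.le hs)
      have r2 : (c ⊔ cHat) * s * cHat ≤ p * ((c ⊔ cHat) * s * cHat) :=
        le_mul_of_one_le_left (by positivity) hp.le
      have r3 : (c ⊔ cHat) * (t - s) * (c ⊓ cHat) ≤ (c ⊔ cHat) * (c * (t - s)) := by
        calc (c ⊔ cHat) * (t - s) * (c ⊓ cHat) ≤ (c ⊔ cHat) * (t - s) * c :=
              mul_le_mul_of_nonneg_left m1 (mul_nonneg hu.le hτ.le)
          _ = (c ⊔ cHat) * (c * (t - s)) := by ring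
      have expand : p * (c ⊔ cHat) * (cHat * s + c * (t - s) / p) =
          p * ((c ⊔ cHat) * s * cHat) + (c ⊔ cHat) * (c * (t - s)) := by
        field_simp
      rw [expand]
      nlinarith [r1, r2, r3]
    have h2 : gaussK d (cHat * s + c * (t - s) / p) x y ≤
        (p * max c cHat / min c cHat) ^ ((d:ℝ)/2) * gaussK d (max c cHat * t) x y := by
      calc gaussK d (cHat * s + c * (t - s) / p) x y
          ≤ (max c cHat * t / (cHat * s + c * (t - s) / p)) ^ ((d:ℝ)/2) *
              gaussK d (max c cHat * t) x y := gauss_mono hv hvut x y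
        _ ≤ (p * max c cHat / min c cHat) ^ ((d:ℝ)/2) * gaussK d (max c cHat * t) x y := by
            apply mul_le_mul_of_nonneg_right _ (gaussK_nonneg (by positivity) x y)
            exact Real.rpow_le_rpow (by positivity) hratio (by positivity)
    -- Step 3 : express gaussK (u t) via gaussK (p u t) ^ p
    have h3 : gaussK d (max c cHat * t) x y =
        p ^ ((d:ℝ)/2) * (2*π*(p * max c cHat * t)) ^ ((d:ℝ)*(p-1)/2) *
          gaussK d (p * max c cHat * t) x y ^ p := by
      have hgp := gauss_pow hput hpp x y
      rw [show p * max c cHat * t / p = max c cHat * t by field_simp] at hgp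
      rw [hgp]
      rw [show p ^ ((d:ℝ)/2) * (2*π*(p * max c cHat * t)) ^ ((d:ℝ)*(p-1)/2) *
          (p ^ (-(d:ℝ)/2) * (2*π*(p * max c cHat * t)) ^ (-(d:ℝ)*(p-1)/2) *
            gaussK d (max c cHat * t) x y) =
          (p ^ ((d:ℝ)/2) * p ^ (-(d:ℝ)/2)) *
            ((2*π*(p * max c cHat * t)) ^ ((d:ℝ)*(p-1)/2) *
              (2*π*(p * max c cHat * t)) ^ (-(d:ℝ)*(p-1)/2)) *
            gaussK d (max c cHat * t) x y by ring]
      rw [← Real.rpow_add hpp, ← Real.rpow_add (by positivity),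
        show (d:ℝ)/2 + -(d:ℝ)/2 = 0 by ring,
        show (d:ℝ)*(p-1)/2 + -(d:ℝ)*(p-1)/2 = 0 by ring,
        Real.rpow_zero, Real.rpow_zero, one_mul, one_mul]
    -- Put the three steps together
    have h4 : (∫ z, q z * gaussK d (c * (t - s)) z y ^ p) ≤
        (Chat * K * (p * max c cHat / min c cHat) ^ ((d:ℝ)/2) *
          (p ^ ((d:ℝ)/2) * (2*π*(p * max c cHat * t)) ^ ((d:ℝ)*(p-1)/2))) *
          gaussK d (p * max c cHat * t) x y ^ p := by
      calc (∫ z, q z * gaussK d (c * (t - s)) z y ^ p)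
          ≤ (Chat * K) * gaussK d (cHat * s + c * (t - s) / p) x y := h1
        _ ≤ (Chat * K) * ((p * max c cHat / min c cHat) ^ ((d:ℝ)/2) *
              gaussK d (max c cHat * t) x y) :=
            mul_le_mul_of_nonneg_left h2 (by positivity)
        _ = _ := by rw [h3]; ring
    -- constant identification
    have hconst : Chat * K * (p * max c cHat / min c cHat) ^ ((d:ℝ)/2) *
        (p ^ ((d:ℝ)/2) * (2*π*(p * max c cHat * t)) ^ ((d:ℝ)*(p-1)/2)) =
        ((Chat ^ (1 / p) / c ^ ((d : ℝ) * (p - 1) / (2 * p))) *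
          ((p * max c cHat) ^ ((d : ℝ) / 2) / (min c cHat) ^ ((d : ℝ) / (2 * p))) *
          (t / (t - s)) ^ ((d : ℝ) * (p - 1) / (2 * p))) ^ p := by
      -- expand the right-hand side power
      have hX : (Chat ^ (1 / p) / c ^ ((d : ℝ) * (p - 1) / (2 * p))) ^ p =
          Chat / c ^ ((d:ℝ)*(p-1)/2) := by
        rw [Real.div_rpow (Real.rpow_nonneg hChat.le _) (Real.rpow_nonneg hc.le _),
          ← Real.rpow_mul hChat.le, ← Real.rpow_mul hc.le,
          show 1/p*p = 1 by field_simp, show (d:ℝ)*(p-1)/(2*p)*p = (d:ℝ)*(p-1)/2 by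
            field_simp, Real.rpow_one]
      have hY : ((p * max c cHat) ^ ((d : ℝ) / 2) / (min c cHat) ^ ((d : ℝ) / (2 * p))) ^ p =
          (p * max c cHat) ^ ((d:ℝ)*p/2) / (min c cHat) ^ ((d:ℝ)/2) := by
        rw [Real.div_rpow (Real.rpow_nonneg (by positivity) _) (Real.rpow_nonneg hmn.le _),
          ← Real.rpow_mul (by positivity : (0:ℝ) ≤ p * max c cHat), ← Real.rpow_mul hmn.le,
          show (d:ℝ)/2*p = (d:ℝ)*p/2 by ring,
          show (d:ℝ)/(2*p)*p = (d:ℝ)/2 by field_simp]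
      have hZ : ((t / (t - s)) ^ ((d : ℝ) * (p - 1) / (2 * p))) ^ p =
          (t/(t-s)) ^ ((d:ℝ)*(p-1)/2) := by
        rw [← Real.rpow_mul (by positivity : (0:ℝ) ≤ t/(t-s)),
          show (d:ℝ)*(p-1)/(2*p)*p = (d:ℝ)*(p-1)/2 by field_simp]
      conv_rhs => rw [Real.mul_rpow (by positivity) (by positivity),
        Real.mul_rpow (by positivity) (by positivity)]
      rw [hX, hY, hZ]
      -- now an identity between products of rpow's
      rw [hK]
      have hA : (0:ℝ) < 2*π*(c*(t-s)) := by positivity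
      have hB : (0:ℝ) < 2*π*(p * max c cHat * t) := by positivity
      have hAB : (2*π*(c*(t-s))) ^ (-(d:ℝ)*(p-1)/2) *
          (2*π*(p * max c cHat * t)) ^ ((d:ℝ)*(p-1)/2) =
          ((p * max c cHat) * (t/(t-s)) / c) ^ ((d:ℝ)*(p-1)/2) := by
        rw [show -(d:ℝ)*(p-1)/2 = -((d:ℝ)*(p-1)/2) by ring, Real.rpow_neg hA.le,
          inv_mul_eq_div, ← Real.div_rpow hB.le hA.le]
        congr 1
        field_simp
      calc Chat * (p ^ (-(d:ℝ)/2) * (2*π*(c*(t-s))) ^ (-(d:ℝ)*(p-1)/2)) *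
            (p * max c cHat / min c cHat) ^ ((d:ℝ)/2) *
            (p ^ ((d:ℝ)/2) * (2*π*(p * max c cHat * t)) ^ ((d:ℝ)*(p-1)/2))
          = Chat * (p ^ (-(d:ℝ)/2) * p ^ ((d:ℝ)/2)) *
              ((2*π*(c*(t-s))) ^ (-(d:ℝ)*(p-1)/2) *
                (2*π*(p * max c cHat * t)) ^ ((d:ℝ)*(p-1)/2)) *
              (p * max c cHat / min c cHat) ^ ((d:ℝ)/2) := by ring
        _ = Chat * ((p * max c cHat) * (t/(t-s)) / c) ^ ((d:ℝ)*(p-1)/2) *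
              ((p * max c cHat) ^ ((d:ℝ)/2) / (min c cHat) ^ ((d:ℝ)/2)) := by
            rw [← Real.rpow_add hpp, show -(d:ℝ)/2 + (d:ℝ)/2 = 0 by ring, Real.rpow_zero,
              hAB, Real.div_rpow (by positivity) hmn.le]
            ring
        _ = Chat * ((p * max c cHat) ^ ((d:ℝ)*(p-1)/2) * (t/(t-s)) ^ ((d:ℝ)*(p-1)/2) /
              c ^ ((d:ℝ)*(p-1)/2)) *
              ((p * max c cHat) ^ ((d:ℝ)/2) / (min c cHat) ^ ((d:ℝ)/2)) := by
            rw [Real.div_rpow (by positivity) hc.le,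
              Real.mul_rpow (by positivity) (by positivity)]
        _ = Chat / c ^ ((d:ℝ)*(p-1)/2) *
              ((p * max c cHat) ^ ((d:ℝ)*(p-1)/2) * (p * max c cHat) ^ ((d:ℝ)/2) /
                (min c cHat) ^ ((d:ℝ)/2)) * (t/(t-s)) ^ ((d:ℝ)*(p-1)/2) := by ring
        _ = Chat / c ^ ((d:ℝ)*(p-1)/2) *
              ((p * max c cHat) ^ ((d:ℝ)*p/2) / (min c cHat) ^ ((d:ℝ)/2)) *
              (t/(t-s)) ^ ((d:ℝ)*(p-1)/2) := by
            rw [← Real.rpow_add (by positivity : (0:ℝ) < p * max c cHat),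
              show (d:ℝ)*(p-1)/2 + (d:ℝ)/2 = (d:ℝ)*p/2 by ring]
    -- conclude via taking p-th roots
    have hI0 : 0 ≤ (∫ z, q z * gaussK d (c * (t - s)) z y ^ p) :=
      integral_nonneg fun z ↦ mul_nonneg (hq0 z) (Real.rpow_nonneg (gaussK_nonneg hb2.le z y) p)
    have step := Real.rpow_le_rpow hI0 (h4.trans_eq (by rw [hconst])) (by positivity : (0:ℝ) ≤ 1/p)
    refine le_trans step (le_of_eq ?_)
    rw [Real.mul_rpow (Real.rpow_nonneg hCst.le p) (Real.rpow_nonneg hG p),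
      ← Real.rpow_mul hCst.le, ← Real.rpow_mul hG,
      show p * (1/p) = 1 by field_simp, Real.rpow_one, Real.rpow_one]
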